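/- Let ρ₁, ρ₂ ∈ (-1,0) and p₁ > p₂ > 0. Define g(t) = p₁(1 - 2Φ(√((1-ρ₁)/(1+ρ₁))·t)) - p₂·Φ(-√((1+ρ₂)/(1-ρ₂))·t) for t < 0, where Φ is the standard normal CDF. Then g has exactly one root in (-∞, 0). -/

import Mathlib

open Real Set Filter MeasureTheory Topology

/-- Standard normal CDF. -/
noncomputable def stdNormalCDF (t : ℝ) : ℝ :=
  ∫ x in Set.Iic t, (1 / Real.sqrt (2 * Real.pi)) * Real.exp (-x ^ 2 / 2)

/-- Standard normal density. -/
noncomputable def sg (x : ℝ) : ℝ := (1 / Real.sqrt (2 * Real.pi)) * Real.exp (-x ^ 2 / 2)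

lemma sg_pos (x : ℝ) : 0 < sg x := by
  have h : 0 < Real.sqrt (2 * Real.pi) := Real.sqrt_pos.2 (by positivity)
  exact mul_pos (by positivity) (Real.exp_pos _)

lemma sg_neg (x : ℝ) : sg (-x) = sg x := by
  unfold sg; congr 1; ring_nf

lemma sg_cont : Continuous sg := by
  unfold sg; fun_prop

lemma sg_eq : sg = fun x : ℝ => (1 / Real.sqrt (2 * Real.pi)) * Real.exp (-(1/2) * x ^ 2) := by
  funext x
  unfold sg
  congr 2
  ring

lemma sg_integrable : Integrable sg := by
  rw [sg_eq]
  exact (integrable_exp_neg_mul_sq (by norm_num : (0:ℝ) < 1/2)).const_mul _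

lemma sg_integral : ∫ x, sg x = 1 := by
  have h0 : ∫ x : ℝ, Real.exp (-(1/2) * x ^ 2) = Real.sqrt (Real.pi / (1/2)) :=
    integral_gaussian (1/2)
  have h1 : ∫ x, sg x = (1 / Real.sqrt (2 * Real.pi)) * ∫ x : ℝ, Real.exp (-(1/2) * x ^ 2) := by
    rw [← integral_const_mul, sg_eq]
  have h2 : Real.pi / (1/2) = 2 * Real.pi := by ring
  have h3 : Real.sqrt (2 * Real.pi) ≠ 0 := ne_of_gt (Real.sqrt_pos.2 (by positivity))
  rw [h1, h0, h2]
  field_simp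

lemma cdf_eq (t : ℝ) : stdNormalCDF t = ∫ x in Set.Iic t, sg x := rfl

lemma cdf_hasDerivAt (t : ℝ) : HasDerivAt stdNormalCDF (sg t) t := by
  have h : HasDerivAt (fun u => ∫ x in (0:ℝ)..u, sg x) (sg t) t :=
    intervalIntegral.integral_hasDerivAt_right sg_integrable.intervalIntegrable
      (sg_cont.stronglyMeasurableAtFilter _ _) sg_cont.continuousAt
  have h2 : stdNormalCDF = fun u => (∫ x in Set.Iic (0:ℝ), sg x) + ∫ x in (0:ℝ)..u, sg x := by
    funext u
    rw [cdf_eq, ← intervalIntegral.integral_Iic_sub_Iic sg_integrable.integrableOn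
      sg_integrable.integrableOn]
    ring
  rw [h2]
  exact h.const_add _

lemma cdf_cont : Continuous stdNormalCDF :=
  continuous_iff_continuousAt.2 fun t => (cdf_hasDerivAt t).continuousAt

lemma cdf_tendsto_atTop : Tendsto stdNormalCDF atTop (𝓝 1) := by
  have h := tendsto_setIntegral_of_monotone (μ := volume) (s := fun t : ℝ => Set.Iic t)
    (f := sg) (fun t => measurableSet_Iic) (fun u v huv => Iic_subset_Iic.2 huv)
    (by rw [Set.iUnion_Iic]; exact sg_integrable.integrableOn)
  rw [Set.iUnion_Iic, Measure.restrict_univ, sg_integral] at h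
  exact h

lemma cdf_tendsto_atBot : Tendsto stdNormalCDF atBot (𝓝 0) := by
  have h := tendsto_setIntegral_of_antitone (μ := volume) (s := fun t : ℝ => Set.Iic (-t))
    (f := sg) (fun t => measurableSet_Iic)
    (fun u v huv => Iic_subset_Iic.2 (neg_le_neg huv))
    ⟨0, sg_integrable.integrableOn⟩
  have hI : ⋂ t : ℝ, Set.Iic (-t) = (∅ : Set ℝ) := by
    ext x
    simp only [Set.mem_iInter, Set.mem_Iic, Set.mem_empty_iff_false, iff_false, not_forall, not_le]
    exact ⟨-(x - 1), by linarith⟩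
  rw [hI] at h
  simp only [Measure.restrict_empty, integral_zero_measure] at h
  have h2 := h.comp tendsto_neg_atBot_atTop
  have h3 : ((fun t : ℝ => ∫ x in Set.Iic (-t), sg x) ∘ fun t : ℝ => -t) = stdNormalCDF := by
    funext t; simp only [Function.comp_apply, neg_neg]; rw [cdf_eq]
  rwa [h3] at h2

lemma cdf_zero : stdNormalCDF 0 = 1 / 2 := by
  have h1 : ∫ x in Set.Iic (0:ℝ), sg x = ∫ x in Set.Ioi (0:ℝ), sg x := by
    have h := integral_comp_neg_Ioi (0:ℝ) sg
    rw [neg_zero] at h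
    rw [← h]
    simp only [sg_neg]
  have h2 := intervalIntegral.integral_Iic_add_Ioi (b := (0:ℝ)) (f := sg) (μ := volume)
    sg_integrable.integrableOn sg_integrable.integrableOn
  rw [sg_integral] at h2
  rw [cdf_eq]
  linarith

set_option maxHeartbeats 2000000 in
/-- For `ρ₁, ρ₂ ∈ (-1,0)` and `p₁ > p₂ > 0`, the function
`g(t) = p₁(1 - 2Φ(√((1-ρ₁)/(1+ρ₁))·t)) - p₂·Φ(-√((1+ρ₂)/(1-ρ₂))·t)`
has exactly one root in `(-∞, 0)`. -/
theorem unique_root (ρ₁ ρ₂ p₁ p₂ : ℝ) (hρ₁ : ρ₁ ∈ Set.Ioo (-1 : ℝ) 0)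
    (hρ₂ : ρ₂ ∈ Set.Ioo (-1 : ℝ) 0) (hp : p₂ < p₁) (hp₂ : 0 < p₂) :
    ∃! t : ℝ, t < 0 ∧
      p₁ * (1 - 2 * stdNormalCDF (Real.sqrt ((1 - ρ₁) / (1 + ρ₁)) * t)) -
        p₂ * stdNormalCDF (-(Real.sqrt ((1 + ρ₂) / (1 - ρ₂)) * t)) = 0 := by
  obtain ⟨hρ₁l, hρ₁r⟩ := hρ₁
  obtain ⟨hρ₂l, hρ₂r⟩ := hρ₂
  set a := Real.sqrt ((1 - ρ₁) / (1 + ρ₁)) with ha_def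
  set b := Real.sqrt ((1 + ρ₂) / (1 - ρ₂)) with hb_def
  have h1ρ₁ : 0 < 1 + ρ₁ := by linarith
  have ha1 : 1 < a := by
    rw [ha_def]
    rw [Real.lt_sqrt (by norm_num)]
    rw [one_pow, lt_div_iff₀ h1ρ₁]; linarith
  have ha0 : 0 < a := lt_trans one_pos ha1
  have hb0 : 0 < b := Real.sqrt_pos.2 (div_pos (by linarith) (by linarith))
  have hb1 : b < 1 := by
    rw [hb_def, Real.sqrt_lt' one_pos, one_pow, div_lt_one (by linarith)]
    linarith
  have hD : 0 < a ^ 2 - b ^ 2 := by nlinarith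
  have hp₁ : 0 < p₁ := lt_trans hp₂ hp
  set G : ℝ → ℝ := fun t =>
    p₁ * (1 - 2 * stdNormalCDF (a * t)) - p₂ * stdNormalCDF (-(b * t)) with hGdef
  show ∃! t : ℝ, t < 0 ∧ G t = 0
  -- derivative of G
  have hG' : ∀ t : ℝ, HasDerivAt G (p₂ * b * sg (b * t) - 2 * p₁ * a * sg (a * t)) t := by
    intro t
    have hia : HasDerivAt (fun t : ℝ => a * t) a t := by
      simpa using (hasDerivAt_id t).const_mul a
    have hib : HasDerivAt (fun t : ℝ => -(b * t)) (-b) t := by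
      simpa using (hasDerivAt_id t).const_mul (-b)
    have h1 : HasDerivAt (fun t => stdNormalCDF (a * t)) (sg (a * t) * a) t :=
      (cdf_hasDerivAt (a * t)).comp t hia
    have h2 : HasDerivAt (fun t => stdNormalCDF (-(b * t))) (sg (-(b * t)) * (-b)) t :=
      by simpa [Function.comp_def] using (cdf_hasDerivAt (-(b * t))).comp t hib
    have h4 : HasDerivAt G
        (p₁ * (-(2 * (sg (a * t) * a))) - p₂ * (sg (-(b * t)) * (-b))) t :=
      (((h1.const_mul 2).const_sub 1).const_mul p₁).sub (h2.const_mul p₂)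
    have heq : p₁ * (-(2 * (sg (a * t) * a))) - p₂ * (sg (-(b * t)) * (-b))
        = p₂ * b * sg (b * t) - 2 * p₁ * a * sg (a * t) := by
      rw [sg_neg]; ring
    rwa [heq] at h4
  have hGcont : Continuous G := continuous_iff_continuousAt.2 fun t => (hG' t).continuousAt
  -- constants
  have hKpos : 0 < 2 * p₁ * a / (p₂ * b) := by positivity
  have hK : 1 < 2 * p₁ * a / (p₂ * b) := by
    rw [lt_div_iff₀ (by positivity)]
    nlinarith
  obtain ⟨L, hLdef⟩ : ∃ L : ℝ, L = 2 * Real.log (2 * p₁ * a / (p₂ * b)) / (a ^ 2 - b ^ 2) :=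
    ⟨_, rfl⟩
  have hL0 : 0 < L := hLdef ▸ div_pos (mul_pos two_pos (Real.log_pos hK)) hD
  obtain ⟨T, hTdef⟩ : ∃ T : ℝ, T = -Real.sqrt L := ⟨_, rfl⟩
  have hT0 : T < 0 := hTdef ▸ neg_lt_zero.2 (Real.sqrt_pos.2 hL0)
  have hsqL : Real.sqrt L ^ 2 = L := Real.sq_sqrt hL0.le
  -- key sign equivalences
  have hexp : ∀ t : ℝ, p₂ * b * sg (b * t)
      = (1 / Real.sqrt (2 * Real.pi)) * (p₂ * b * Real.exp (-(b*t)^2/2)) := by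
    intro t; unfold sg; ring
  have hexp' : ∀ t : ℝ, 2 * p₁ * a * sg (a * t)
      = (1 / Real.sqrt (2 * Real.pi)) * (2 * p₁ * a * Real.exp (-(a*t)^2/2)) := by
    intro t; unfold sg; ring
  have hsplit : ∀ t : ℝ, p₂ * b * Real.exp (-(b*t)^2/2)
      = (p₂ * b * Real.exp ((a ^ 2 - b ^ 2) * t ^ 2 / 2)) * Real.exp (-(a*t)^2/2) := by
    intro t
    rw [mul_assoc (p₂ * b), ← Real.exp_add]
    congr 2
    ring
  have hCpos : 0 < 1 / Real.sqrt (2 * Real.pi) := by positivity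
  have key1 : ∀ t : ℝ, (2 * p₁ * a * sg (a * t) < p₂ * b * sg (b * t) ↔ L < t ^ 2) := by
    intro t
    rw [hexp, hexp', mul_lt_mul_iff_right₀ hCpos, hsplit,
      mul_lt_mul_iff_left₀ (Real.exp_pos _), mul_comm (p₂ * b),
      ← div_lt_iff₀ (by positivity : (0:ℝ) < p₂ * b),
      ← Real.log_lt_iff_lt_exp hKpos, hLdef, div_lt_iff₀ hD]
    constructor <;> intro h <;> nlinarith [h]
  have key2 : ∀ t : ℝ, (p₂ * b * sg (b * t) < 2 * p₁ * a * sg (a * t) ↔ t ^ 2 < L) := by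
    intro t
    rw [hexp, hexp', mul_lt_mul_iff_right₀ hCpos, hsplit,
      mul_lt_mul_iff_left₀ (Real.exp_pos _), mul_comm (p₂ * b),
      ← lt_div_iff₀ (by positivity : (0:ℝ) < p₂ * b),
      ← Real.lt_log_iff_exp_lt hKpos, hLdef, lt_div_iff₀ hD]
    constructor <;> intro h <;> nlinarith [h]
  -- derivative sign
  have hder_pos : ∀ t : ℝ, t < T → 0 < p₂ * b * sg (b * t) - 2 * p₁ * a * sg (a * t) := by
    intro t ht
    have h3 : Real.sqrt L < -t := by rw [hTdef] at ht; linarith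
    have h2 : L < t ^ 2 := by nlinarith [Real.sqrt_nonneg L]
    linarith [(key1 t).2 h2]
  have hder_neg : ∀ t : ℝ, T < t → t < 0 → p₂ * b * sg (b * t) - 2 * p₁ * a * sg (a * t) < 0 := by
    intro t ht1 ht2
    have h3 : -t < Real.sqrt L := by rw [hTdef] at ht1; linarith
    have h2 : t ^ 2 < L := by nlinarith [Real.sqrt_nonneg L]
    linarith [(key2 t).2 h2]
  -- monotonicity
  have hmono : StrictMonoOn G (Set.Iic T) := by
    apply strictMonoOn_of_deriv_pos (convex_Iic T) hGcont.continuousOn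
    intro t ht
    rw [interior_Iic] at ht
    rw [(hG' t).deriv]
    exact hder_pos t ht
  have hanti : StrictAntiOn G (Set.Icc T 0) := by
    apply strictAntiOn_of_deriv_neg (convex_Icc T 0) hGcont.continuousOn
    intro t ht
    rw [interior_Icc] at ht
    rw [(hG' t).deriv]
    exact hder_neg t ht.1 ht.2
  -- limit at -infinity
  have hlim : Tendsto G atBot (𝓝 (p₁ - p₂)) := by
    have hta : Tendsto (fun t : ℝ => a * t) atBot atBot := by
      simpa using tendsto_id.const_mul_atBot (l := atBot) ha0
    have htb : Tendsto (fun t : ℝ => -(b * t)) atBot atTop := by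
      have hbb : Tendsto (fun t : ℝ => b * t) atBot atBot := by
        simpa using tendsto_id.const_mul_atBot (l := atBot) hb0
      exact tendsto_neg_atBot_atTop.comp hbb
    have hA : Tendsto (fun t => stdNormalCDF (a * t)) atBot (𝓝 0) :=
      cdf_tendsto_atBot.comp hta
    have hB : Tendsto (fun t => stdNormalCDF (-(b * t))) atBot (𝓝 1) :=
      cdf_tendsto_atTop.comp htb
    have hone : Tendsto (fun _ : ℝ => (1:ℝ)) atBot (𝓝 1) := tendsto_const_nhds
    have h := ((hone.sub (hA.const_mul 2)).const_mul p₁).sub (hB.const_mul p₂)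
    have heq : p₁ * (1 - 2 * 0) - p₂ * 1 = p₁ - p₂ := by ring
    rw [heq] at h
    exact h
  -- G positive on Iic T
  have hpos : ∀ t : ℝ, t ≤ T → 0 < G t := by
    intro t ht
    have hle : p₁ - p₂ ≤ G t := by
      apply le_of_tendsto hlim
      filter_upwards [eventually_le_atBot t] with s hs
      exact hmono.monotoneOn (Set.mem_Iic.2 (hs.trans ht)) (Set.mem_Iic.2 ht) hs
    linarith
  -- G 0 < 0
  have hG0 : G 0 < 0 := by
    have hh : G 0 = p₁ * (1 - 2 * stdNormalCDF (a * 0)) - p₂ * stdNormalCDF (-(b * 0)) := rfl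
    rw [hh, mul_zero, mul_zero, neg_zero, cdf_zero]
    nlinarith
  -- existence via IVT
  have hGT : 0 < G T := hpos T le_rfl
  have hIVT : (0:ℝ) ∈ G '' Set.Ioo T 0 := by
    apply intermediate_value_Ioo' hT0.le hGcont.continuousOn
    exact ⟨hG0, hGT⟩
  obtain ⟨t₀, ht₀mem, ht₀⟩ := hIVT
  refine ⟨t₀, ⟨ht₀mem.2, ht₀⟩, ?_⟩
  rintro t' ⟨ht'0, ht'G⟩
  have ht'T : T < t' := by
    by_contra hcon
    push_neg at hcon
    have hx := hpos t' hcon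
    rw [ht'G] at hx
    exact lt_irrefl 0 hx
  exact hanti.injOn (Set.mem_Icc.2 ⟨ht'T.le, ht'0.le⟩)
    (Set.mem_Icc.2 ⟨ht₀mem.1.le, ht₀mem.2.le⟩) (by rw [ht'G, ht₀])
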